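/- Let Ω ⊆ ℝˢ be a closed convex set with metric projection P_Ω, and suppose P_Ω is directionally differentiable at a point u ∈ ℝˢ with z̄ = P_Ω(u). Then for every direction h ∈ ℝˢ, the directional derivative satisfies P'_Ω(u; h) ∈ K(z̄, u − z̄) := T_Ω(z̄) ∩ {u − z̄}^⊥; i.e., directional derivatives of the projection lie in the critical cone. -/

import Mathlib

open Filter Topology Set RealInnerProductSpace
noncomputable section

/-- Contingent (Bouligand tangent) cone. -/
def contingentCone {E : Type*} [NormedAddCommGroup E] [NormedSpace ℝ E]
    (Ω : Set E) (z : E) : Set E :=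
  {d | ∃ (t : ℕ → ℝ) (w : ℕ → E), (∀ n, 0 < t n) ∧
    Tendsto t atTop (nhds 0) ∧ Tendsto w atTop (nhds d) ∧ ∀ n, z + t n • w n ∈ Ω}

private lemma proj_inner_le {E : Type*} [NormedAddCommGroup E] [InnerProductSpace ℝ E]
    {Ω : Set E} (hconv : Convex ℝ Ω) {x z : E} (hz : z ∈ Ω)
    (hmin : ∀ w ∈ Ω, dist x z ≤ dist x w) : ∀ w ∈ Ω, ⟪x - z, w - z⟫ ≤ 0 := by
  rw [← norm_eq_iInf_iff_real_inner_le_zero hconv hz]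
  haveI : Nonempty Ω := ⟨⟨z, hz⟩⟩
  refine le_antisymm (le_ciInf fun w => ?_) (ciInf_le (f := fun w : Ω => ‖x - (w : E)‖) ⟨0, fun _ ⟨_, h⟩ => h ▸ norm_nonneg _⟩ ⟨z, hz⟩)
  simpa [dist_eq_norm] using hmin w w.2

/-- directional derivatives of the metric projection onto a closed convex
set lie in the critical cone `K(zb, u − zb) = T_Ω(zb) ∩ {u − zb}ᗮ`. -/
theorem projection_directional_derivative_in_criticalCone {s : ℕ}
    (Ω : Set (EuclideanSpace ℝ (Fin s))) (hne : Ω.Nonempty)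
    (hclosed : IsClosed Ω) (hconv : Convex ℝ Ω)
    (P : EuclideanSpace ℝ (Fin s) → EuclideanSpace ℝ (Fin s))
    (hP : ∀ x, P x ∈ Ω ∧ ∀ w ∈ Ω, dist x (P x) ≤ dist x w)
    (u : EuclideanSpace ℝ (Fin s)) (zb : EuclideanSpace ℝ (Fin s)) (hzb : zb = P u) :
    ∀ (h v : EuclideanSpace ℝ (Fin s)),
      Tendsto (fun t : ℝ => t⁻¹ • (P (u + t • h) - P u)) (nhdsWithin 0 (Set.Ioi 0)) (nhds v) →
      v ∈ contingentCone Ω zb ∧ ⟪u - zb, v⟫ = 0 := by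
  intro h v hv
  have hzbΩ : zb ∈ Ω := hzb ▸ (hP u).1
  -- sequence for contingent cone
  have htseq : Tendsto (fun n : ℕ => (1 : ℝ) / (n + 1)) atTop (𝓝 0) :=
    tendsto_one_div_add_atTop_nhds_zero_nat
  have htpos : ∀ n : ℕ, (0 : ℝ) < 1 / (n + 1) := fun n => by positivity
  have htwithin : Tendsto (fun n : ℕ => (1 : ℝ) / (n + 1)) atTop (nhdsWithin 0 (Set.Ioi 0)) :=
    tendsto_nhdsWithin_of_tendsto_nhds_of_eventually_within _ htseq
      (Eventually.of_forall fun n => htpos n)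
  constructor
  · refine ⟨fun n => 1 / (n + 1),
      fun n => ((1 : ℝ) / (n + 1))⁻¹ • (P (u + ((1 : ℝ) / (n + 1)) • h) - P u),
      htpos, htseq, hv.comp htwithin, fun n => ?_⟩
    rw [smul_inv_smul₀ (htpos n).ne', hzb]
    simpa using (hP (u + ((1 : ℝ) / (n + 1)) • h)).1
  · -- orthogonality
    set f : ℝ → EuclideanSpace ℝ (Fin s) := fun t => t⁻¹ • (P (u + t • h) - P u) with hf
    have hinner : Tendsto (fun t => ⟪u - zb, f t⟫) (nhdsWithin 0 (Set.Ioi 0))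
        (𝓝 ⟪u - zb, v⟫) :=
      ((continuous_const.inner continuous_id).tendsto v).comp hv
    have hne' : (nhdsWithin (0:ℝ) (Set.Ioi 0)).NeBot := nhdsGT_neBot 0
    -- upper bound : f t ⟂ ≤ 0
    have hle : ⟪u - zb, v⟫ ≤ 0 := by
      refine le_of_tendsto hinner (eventually_nhdsWithin_of_forall fun t ht => ?_)
      have h1 : ⟪u - zb, P (u + t • h) - zb⟫ ≤ 0 := by
        have := proj_inner_le hconv hzbΩ (fun w hw => hzb ▸ (hP u).2 w hw)
          (P (u + t • h)) (hP (u + t • h)).1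
        rwa [hzb] at this ⊢
      have : ⟪u - zb, f t⟫ = t⁻¹ * ⟪u - zb, P (u + t • h) - zb⟫ := by
        rw [hf, hzb, real_inner_smul_right]
      rw [this]
      exact mul_nonpos_of_nonneg_of_nonpos (inv_nonneg.2 (le_of_lt ht)) h1
    -- lower bound
    have hzt : Tendsto (fun t : ℝ => P (u + t • h) - zb) (nhdsWithin 0 (Set.Ioi 0)) (𝓝 0) := by
      have : Tendsto (fun t : ℝ => t • f t) (nhdsWithin 0 (Set.Ioi 0)) (𝓝 ((0:ℝ) • v)) :=
        (tendsto_id.mono_left nhdsWithin_le_nhds).smul hv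
      rw [zero_smul] at this
      refine this.congr' (eventually_nhdsWithin_of_forall fun t ht => ?_)
      rw [hf, smul_inv_smul₀ (ne_of_gt ht), hzb]
    have hlow : Tendsto (fun t : ℝ => -⟪h, P (u + t • h) - zb⟫) (nhdsWithin 0 (Set.Ioi 0))
        (𝓝 0) := by
      have hc : Continuous fun x : EuclideanSpace ℝ (Fin s) => ⟪h, x⟫ :=
        Continuous.inner continuous_const continuous_id
      have := (hc.tendsto (0 : EuclideanSpace ℝ (Fin s))).comp hzt
      simpa using this.neg
    have hge : 0 ≤ ⟪u - zb, v⟫ := by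
      refine le_of_tendsto_of_tendsto hlow hinner
        (eventually_nhdsWithin_of_forall fun t ht => ?_)
      show -⟪h, P (u + t • h) - zb⟫ ≤ ⟪u - zb, f t⟫
      -- show -⟪h, z_t - zb⟫ ≤ ⟪u - zb, f t⟫
      set zt := P (u + t • h) with hzt'
      have hztΩ : zt ∈ Ω := (hP (u + t • h)).1
      have key : ⟪u + t • h - zt, zb - zt⟫ ≤ 0 :=
        proj_inner_le hconv hztΩ (hP (u + t • h)).2 zb hzbΩ
      -- expand: ⟪(u - zb) + t•h - (zt - zb), -(zt - zb)⟫ ≤ 0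
      have expand : ⟪u - zb, zt - zb⟫ + t * ⟪h, zt - zb⟫ - ‖zt - zb‖^2 =
          -⟪u + t • h - zt, zb - zt⟫ := by
        rw [show zb - zt = -(zt - zb) by abel, inner_neg_right, neg_neg,
          show u + t • h - zt = (u - zb) + t • h - (zt - zb) by abel]
        have hnorm : ‖zt - zb‖^2 = ⟪zt, zt - zb⟫ - ⟪zb, zt - zb⟫ := by
          rw [← real_inner_self_eq_norm_sq, inner_sub_left]
        simp only [inner_sub_left, inner_add_left, real_inner_smul_left]
        linarith [hnorm]
      have hineq : -(t * ⟪h, zt - zb⟫) ≤ ⟪u - zb, zt - zb⟫ := by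
        nlinarith [sq_nonneg ‖zt - zb‖, key, expand]
      have hfteq : ⟪u - zb, f t⟫ = t⁻¹ * ⟪u - zb, zt - zb⟫ := by
        rw [hf, hzb, real_inner_smul_right]
      rw [hfteq]
      rw [neg_le]
      calc -(t⁻¹ * ⟪u - zb, zt - zb⟫) ≤ -(t⁻¹ * -(t * ⟪h, zt - zb⟫)) := by
            have := mul_le_mul_of_nonneg_left hineq (inv_nonneg.2 ht.le)
            linarith
        _ = ⟪h, zt - zb⟫ := by
            rw [mul_neg, neg_neg, ← mul_assoc, inv_mul_cancel₀ (ne_of_gt ht), one_mul]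
      -- done
    linarith
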